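/- Lemma 3.7(ii): Let p ∈ [1,∞) and let u : ℝ^d → ℝ be continuously differentiable with u ∈ L^p(ℝ^d) and ∂_i u ∈ L^p(ℝ^d) for all i. Define the Fourier coefficients û_m = ‖ψ_m‖₁^{−1} ∫_{ℝ^d} ψ_m u dx. Then ( h^d vol(R) )^{1/p} ( Σ_m |û_m|^p )^{1/p} ≤ ‖u‖_{L^p(ℝ^d)}, and for each i ∈ {1,…,d}, ( h^d vol(R) )^{1/p} ( Σ_m |(U_i û)_m|^p )^{1/p} ≤ ‖∂_i u‖_{L^p(ℝ^d)}, where (U_i û)_m = (û_{m+e_i} − û_m)/(r_i h). -/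

import Mathlib

open MeasureTheory

noncomputable section

/-- The canonical hat function on `ℝ`. -/
def hat (t : ℝ) : ℝ := max 0 (1 - |t|)

/-- The `i`-th coordinate of the grid-knot `x_m = v + h * r * m`. -/
def gridKnot (d : ℕ) (h : ℝ) (r : Fin d → ℕ) (v : Fin d → ℝ) (m : Fin d → ℤ) (i : Fin d) : ℝ :=
  v i + h * (r i : ℝ) * (m i : ℝ)

/-- The `d`-dimensional hat function centered at the grid-knot `x_m`. -/
def psi (d : ℕ) (h : ℝ) (r : Fin d → ℕ) (v : Fin d → ℝ) (m : Fin d → ℤ) (x : Fin d → ℝ) : ℝ :=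
  ∏ i, hat ((x i - gridKnot d h r v m i) / (h * (r i : ℝ)))

/-- The hat-function imbedding `u(n) = Σ_m u_m ψ_m`. -/
def imbed (d : ℕ) (h : ℝ) (r : Fin d → ℕ) (v : Fin d → ℝ) (u : (Fin d → ℤ) → ℝ)
    (x : Fin d → ℝ) : ℝ :=
  ∑' m : Fin d → ℤ, u m * psi d h r v m x

/-- `vol(R) = r₁ ⋯ r_d`. -/
def volR (d : ℕ) (r : Fin d → ℕ) : ℝ := ∏ i, (r i : ℝ)

/-- Forward finite difference `(U_i u)_m = (u_{m+e_i} - u_m)/(r_i h)`. -/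
def fdiff (d : ℕ) (h : ℝ) (r : Fin d → ℕ) (u : (Fin d → ℤ) → ℝ) (i : Fin d)
    (m : Fin d → ℤ) : ℝ :=
  (u (m + Pi.single i 1) - u m) / ((r i : ℝ) * h)

/-- The discrete norm `|u|²_{R2} = vol(R) Σ_m u_m²`. -/
def norm2R (d : ℕ) (r : Fin d → ℕ) (u : (Fin d → ℤ) → ℝ) : ℝ :=
  volR d r * ∑' m : Fin d → ℤ, u m ^ 2

/-- The discrete Dirichlet form `q_R(u) = vol(R) Σ_i Σ_m (U_i u)_m²`. -/
def qR (d : ℕ) (h : ℝ) (r : Fin d → ℕ) (u : (Fin d → ℤ) → ℝ) : ℝ :=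
  volR d r * ∑ i : Fin d, ∑' m : Fin d → ℤ, (fdiff d h r u i m) ^ 2


/-- The Fourier coefficients `û_m = ‖ψ_m‖₁⁻¹ (ψ_m | u)`, with `‖ψ_m‖₁ = h^d vol(R)`. -/
def hatCoeff (d : ℕ) (h : ℝ) (r : Fin d → ℕ) (v : Fin d → ℝ) (u : (Fin d → ℝ) → ℝ)
    (m : Fin d → ℤ) : ℝ :=
  (h ^ d * volR d r)⁻¹ * ∫ x : Fin d → ℝ, psi d h r v m x * u x

/-! ### hat basics -/

lemma hat_nonneg (t : ℝ) : 0 ≤ hat t := le_max_left _ _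

lemma hat_continuous : Continuous hat := by
  unfold hat; fun_prop

lemma hat_eq_zero {t : ℝ} (ht : 1 ≤ |t|) : hat t = 0 := max_eq_left (by linarith)

lemma hat_eq_indicator : hat = Set.indicator (Set.Icc (-1:ℝ) 1) (fun s => 1 - |s|) := by
  funext t
  by_cases h : t ∈ Set.Icc (-1:ℝ) 1
  · rw [Set.indicator_of_mem h]
    have : |t| ≤ 1 := abs_le.2 ⟨h.1, h.2⟩
    exact max_eq_right (by linarith)
  · rw [Set.indicator_of_notMem h]
    apply hat_eq_zero
    simp only [Set.mem_Icc, not_and_or, not_le] at h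
    rcases h with h1 | h1
    · rw [abs_of_neg (by linarith)]; linarith
    · rw [abs_of_pos (by linarith)]; linarith

lemma hat_integral : ∫ t, hat t = 1 := by
  rw [hat_eq_indicator, integral_indicator measurableSet_Icc,
    integral_Icc_eq_integral_Ioc, ← intervalIntegral.integral_of_le (by norm_num : (-1:ℝ) ≤ 1)]
  have hcont : Continuous fun t : ℝ => 1 - |t| := by fun_prop
  have h1 : ∫ t in (-1:ℝ)..0, (1 - |t|) = ∫ t in (-1:ℝ)..0, (1 + t) := by
    apply intervalIntegral.integral_congr
    intro t ht
    rw [Set.uIcc_of_le (by norm_num : (-1:ℝ) ≤ 0)] at ht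
    have := ht.1; have := ht.2
    show 1 - |t| = 1 + t
    rw [abs_of_nonpos (by linarith)]; ring
  have h2 : ∫ t in (0:ℝ)..1, (1 - |t|) = ∫ t in (0:ℝ)..1, (1 - t) := by
    apply intervalIntegral.integral_congr
    intro t ht
    rw [Set.uIcc_of_le (by norm_num : (0:ℝ) ≤ 1)] at ht
    have := ht.1; have := ht.2
    show 1 - |t| = 1 - t
    rw [abs_of_nonneg (by linarith)]
  rw [← intervalIntegral.integral_add_adjacent_intervals
    (hcont.intervalIntegrable (-1) 0) (hcont.intervalIntegrable 0 1), h1, h2]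
  have e1 : ∫ t in (-1:ℝ)..0, (1 + t) = 1/2 := by
    rw [intervalIntegral.integral_add (intervalIntegrable_const) (intervalIntegral.intervalIntegrable_id),
      intervalIntegral.integral_const, integral_id]
    norm_num
  have e2 : ∫ t in (0:ℝ)..1, (1 - t) = 1/2 := by
    rw [intervalIntegral.integral_sub (intervalIntegrable_const) (intervalIntegral.intervalIntegrable_id),
      intervalIntegral.integral_const, integral_id]
    norm_num
  rw [e1, e2]; norm_num

lemma hat_comp_hasCompactSupport {b s : ℝ} (hs : 0 < s) :
    HasCompactSupport (fun y => hat ((y - b)/s)) := by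
  apply HasCompactSupport.intro (isCompact_Icc (a := b - s) (b := b + s))
  intro y hy
  apply hat_eq_zero
  rw [abs_div, abs_of_pos hs, le_div_iff₀ hs, one_mul]
  simp only [Set.mem_Icc, not_and_or, not_le] at hy
  rcases hy with h1 | h1
  · exact le_abs.2 (Or.inr (by linarith))
  · exact le_abs.2 (Or.inl (by linarith))

lemma hat_comp_integral {b s : ℝ} (hs : 0 < s) : ∫ y, hat ((y - b)/s) = s := by
  have h1 : (fun y : ℝ => hat ((y - b)/s)) = fun y => (fun z => hat (z/s)) (y + (-b)) := by
    funext y; simp [sub_eq_add_neg]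
  rw [h1, integral_add_right_eq_self (μ := volume) (fun z => hat (z/s)) (-b),
    MeasureTheory.Measure.integral_comp_div (fun z => hat z) s, hat_integral, abs_of_pos hs]
  simp

/-! ### 1-d partition of unity -/

lemma hat_floor_add (t : ℝ) : hat (t - ⌊t⌋) + hat (t - ⌊t⌋ - 1) = 1 := by
  have h0 : (0:ℝ) ≤ t - ⌊t⌋ := sub_nonneg.2 (Int.floor_le t)
  have h1 : t - ⌊t⌋ < 1 := by have := Int.lt_floor_add_one t; linarith
  unfold hat
  rw [abs_of_nonneg h0, abs_of_nonpos (by linarith : t - ⌊t⌋ - 1 ≤ 0),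
    max_eq_right (by linarith), max_eq_right (by linarith)]
  ring

lemma hat_int_eq_zero {t : ℝ} {k : ℤ} (hk1 : k ≠ ⌊t⌋) (hk2 : k ≠ ⌊t⌋ + 1) : hat (t - k) = 0 := by
  apply hat_eq_zero
  rcases lt_or_gt_of_ne hk1 with hlt | hgt
  · have hk : (k:ℝ) ≤ (⌊t⌋:ℝ) - 1 := by
      have : k ≤ ⌊t⌋ - 1 := by omega
      exact_mod_cast this
    have h0 : (⌊t⌋:ℝ) ≤ t := Int.floor_le t
    rw [abs_of_nonneg (by linarith)]; linarith
  · have hk : (⌊t⌋:ℝ) + 2 ≤ (k:ℝ) := by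
      have : ⌊t⌋ + 2 ≤ k := by omega
      exact_mod_cast this
    have h1 : t < (⌊t⌋:ℝ) + 1 := Int.lt_floor_add_one t
    rw [abs_of_nonpos (by linarith)]; linarith

/-! ### psi basics -/

variable {d : ℕ} {h : ℝ} {r : Fin d → ℕ} {v : Fin d → ℝ}

lemma psi_nonneg (m : Fin d → ℤ) (x : Fin d → ℝ) : 0 ≤ psi d h r v m x :=
  Finset.prod_nonneg fun i _ => hat_nonneg _

lemma psi_continuous (m : Fin d → ℤ) : Continuous (psi d h r v m) := by
  unfold psi
  exact continuous_finset_prod _ fun i _ => hat_continuous.comp (by fun_prop)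

lemma psi_eq (hh : 0 < h) (hr : ∀ i, 0 < r i) (m : Fin d → ℤ) (x : Fin d → ℝ) :
    psi d h r v m x = ∏ i, hat ((x i - v i) / (h * (r i : ℝ)) - m i) := by
  unfold psi gridKnot
  apply Finset.prod_congr rfl
  intro i _
  congr 1
  have hs : h * (r i : ℝ) ≠ 0 := by
    have : (0:ℝ) < (r i : ℝ) := by exact_mod_cast hr i
    positivity
  have hri : (r i : ℝ) ≠ 0 := Nat.cast_ne_zero.2 (hr i).ne'
  field_simp
  ring

lemma psi_hasCompactSupport (hh : 0 < h) (hr : ∀ i, 0 < r i) (m : Fin d → ℤ) :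
    HasCompactSupport (psi d h r v m) := by
  apply HasCompactSupport.intro (isCompact_univ_pi
    (fun i => isCompact_Icc (a := gridKnot d h r v m i - h * (r i:ℝ))
      (b := gridKnot d h r v m i + h * (r i:ℝ))))
  intro x hx
  simp only [Set.mem_univ_pi, not_forall] at hx
  obtain ⟨i, hi⟩ := hx
  unfold psi
  apply Finset.prod_eq_zero (Finset.mem_univ i)
  apply hat_eq_zero
  have hs : 0 < h * (r i : ℝ) := by
    have : (0:ℝ) < (r i : ℝ) := by exact_mod_cast hr i
    positivity
  rw [abs_div, abs_of_pos hs, le_div_iff₀ hs, one_mul]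
  simp only [Set.mem_Icc, not_and_or, not_le] at hi
  rcases hi with h1 | h1
  · exact le_abs.2 (Or.inr (by linarith))
  · exact le_abs.2 (Or.inl (by linarith))

lemma psi_integrable (hh : 0 < h) (hr : ∀ i, 0 < r i) (m : Fin d → ℤ) :
    Integrable (psi d h r v m) :=
  (psi_continuous m).integrable_of_hasCompactSupport (psi_hasCompactSupport hh hr m)

lemma volR_pos (hr : ∀ i, 0 < r i) : 0 < volR d r :=
  Finset.prod_pos fun i _ => by exact_mod_cast hr i

lemma psi_integral (hh : 0 < h) (hr : ∀ i, 0 < r i) (m : Fin d → ℤ) :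
    ∫ x, psi d h r v m x = h ^ d * volR d r := by
  unfold psi
  rw [MeasureTheory.integral_fintype_prod_volume_eq_prod (𝕜 := ℝ)
    (fun i y => hat ((y - gridKnot d h r v m i) / (h * (r i : ℝ))))]
  have : ∀ i : Fin d, (∫ y : ℝ, hat ((y - gridKnot d h r v m i) / (h * (r i : ℝ))))
      = h * (r i : ℝ) := by
    intro i
    apply hat_comp_integral
    have : (0:ℝ) < (r i : ℝ) := by exact_mod_cast hr i
    positivity
  rw [Finset.prod_congr rfl fun i _ => this i, Finset.prod_mul_distrib, Finset.prod_const]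
  simp [volR, Finset.card_univ]

lemma psi_lintegral (hh : 0 < h) (hr : ∀ i, 0 < r i) (m : Fin d → ℤ) :
    ∫⁻ x, ENNReal.ofReal (psi d h r v m x) = ENNReal.ofReal (h ^ d * volR d r) := by
  rw [← ofReal_integral_eq_lintegral_ofReal (psi_integrable hh hr m)
    (Filter.Eventually.of_forall fun x => psi_nonneg m x), psi_integral hh hr m]

/-! ### partition of unity -/

lemma psi_tsum_eq_one (hh : 0 < h) (hr : ∀ i, 0 < r i) (x : Fin d → ℝ) :
    ∑' m : Fin d → ℤ, ENNReal.ofReal (psi d h r v m x) = 1 := by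
  set t : Fin d → ℝ := fun i => (x i - v i) / (h * (r i : ℝ)) with ht
  have hpsi : ∀ m : Fin d → ℤ, ENNReal.ofReal (psi d h r v m x)
      = ∏ i, ENNReal.ofReal (hat (t i - m i)) := by
    intro m
    rw [psi_eq hh hr, ENNReal.ofReal_prod_of_nonneg (fun i _ => hat_nonneg _)]
  simp_rw [hpsi]
  set n : Fin d → ℤ := fun i => ⌊t i⌋ with hn
  set e : (Fin d → Bool) → (Fin d → ℤ) := fun c i => n i + (if c i then 1 else 0) with he
  have hinj : Function.Injective e := by
    intro c c' hcc
    funext i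
    have h2 := congrFun hcc i
    simp only [he] at h2
    cases hci : c i <;> cases hci' : c' i <;> simp [hci, hci'] at h2 ⊢ <;> omega
  have hsupp : Function.support (fun m : Fin d → ℤ => ∏ i, ENNReal.ofReal (hat (t i - m i)))
      ⊆ Set.range e := by
    intro m hm
    have hne : ∀ i, hat (t i - m i) ≠ 0 := by
      intro i hzero
      apply hm
      apply Finset.prod_eq_zero (Finset.mem_univ i)
      rw [hzero]; simp
    refine ⟨fun i => decide (m i = n i + 1), ?_⟩
    funext i
    have : m i = n i ∨ m i = n i + 1 := by
      by_contra hcon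
      push_neg at hcon
      exact hne i (hat_int_eq_zero hcon.1 hcon.2)
    simp only [he]
    rcases this with h1 | h1 <;> simp [h1]
  rw [← hinj.tsum_eq hsupp, tsum_fintype]
  have hcast : ∀ (c : Fin d → Bool) (i : Fin d), ((e c i : ℤ) : ℝ)
      = (n i : ℝ) + if c i then (1:ℝ) else 0 := by
    intro c i
    cases hci : c i <;> simp [he, hci]
  simp_rw [hcast]
  set f : (i : Fin d) → Bool → ENNReal :=
    fun i b => ENNReal.ofReal (hat (t i - ((n i : ℝ) + if b then 1 else 0))) with hf
  have hone : ∏ i, ∑ b : Bool, f i b = 1 := by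
    apply Finset.prod_eq_one
    intro i _
    rw [Fintype.sum_bool]
    have hft : f i true = ENNReal.ofReal (hat (t i - ↑⌊t i⌋ - 1)) := by
      simp only [hf, if_true]
      congr 2
      simp only [hn]; push_cast; ring
    have hff : f i false = ENNReal.ofReal (hat (t i - ↑⌊t i⌋)) := by
      simp only [hf, Bool.false_eq_true, if_false]
      congr 2
      simp only [hn]; push_cast; ring
    rw [hft, hff, ← ENNReal.ofReal_add (hat_nonneg _) (hat_nonneg _), add_comm, hat_floor_add]
    simp
  exact (Fintype.prod_sum f).symm.trans hone

/-! ### Jensen inequality on probability spaces -/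

lemma jensen_pow {α : Type*} [MeasurableSpace α] (μ : Measure α) [IsProbabilityMeasure μ]
    {p : ℝ} (hp : 1 ≤ p) {f : α → ℝ} (hf : AEStronglyMeasurable f μ) :
    ENNReal.ofReal |∫ a, f a ∂μ| ^ p ≤ ∫⁻ a, ENNReal.ofReal |f a| ^ p ∂μ := by
  have hp0 : (0:ℝ) < p := lt_of_lt_of_le one_pos hp
  have h1 : ENNReal.ofReal |∫ a, f a ∂μ| ≤ ∫⁻ a, ENNReal.ofReal |f a| ∂μ := by
    calc ENNReal.ofReal |∫ a, f a ∂μ|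
        ≤ ENNReal.ofReal ((∫⁻ a, ENNReal.ofReal |f a| ∂μ).toReal) := by
          apply ENNReal.ofReal_le_ofReal
          simpa [Real.norm_eq_abs] using norm_integral_le_lintegral_norm (μ := μ) f
      _ ≤ ∫⁻ a, ENNReal.ofReal |f a| ∂μ := ENNReal.ofReal_toReal_le
  have h2 : (∫⁻ a, ENNReal.ofReal |f a| ∂μ) ≤ (∫⁻ a, ENNReal.ofReal |f a| ^ p ∂μ) ^ (1/p) := by
    have hle := eLpNorm_le_eLpNorm_of_exponent_le (μ := μ) (p := 1) (q := ENNReal.ofReal p)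
      (by rw [ENNReal.one_le_ofReal]; exact hp) hf
    rw [eLpNorm_one_eq_lintegral_enorm,
      eLpNorm_eq_lintegral_rpow_enorm_toReal (by simp [hp0.ne']; linarith) ENNReal.ofReal_ne_top] at hle
    simp only [ENNReal.toReal_ofReal hp0.le] at hle
    simpa [Real.enorm_eq_ofReal_abs] using hle
  calc ENNReal.ofReal |∫ a, f a ∂μ| ^ p
      ≤ ((∫⁻ a, ENNReal.ofReal |f a| ^ p ∂μ) ^ (1/p)) ^ p :=
        ENNReal.rpow_le_rpow (h1.trans h2) hp0.le
    _ = ∫⁻ a, ENNReal.ofReal |f a| ^ p ∂μ := by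
        rw [← ENNReal.rpow_mul, one_div, inv_mul_cancel₀ hp0.ne', ENNReal.rpow_one]

/-! ### the core estimate -/

lemma core_bound (hh : 0 < h) (hr : ∀ i, 0 < r i) {p : ℝ} (hp : 1 ≤ p)
    (g : (Fin d → ℝ) → ℝ) (hg : Measurable g) :
    ∑' m : Fin d → ℤ, ENNReal.ofReal |(h ^ d * volR d r)⁻¹ * ∫ x, psi d h r v m x * g x| ^ p ≤
      (ENNReal.ofReal (h ^ d * volR d r))⁻¹ * ∫⁻ x, ENNReal.ofReal |g x| ^ p := by
  have hc : 0 < h ^ d * volR d r := mul_pos (pow_pos hh d) (volR_pos hr)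
  set c := h ^ d * volR d r with hcdef
  have hc0 : ENNReal.ofReal c ≠ 0 := (ENNReal.ofReal_pos.2 hc).ne'
  have hctop : ENNReal.ofReal c ≠ ⊤ := ENNReal.ofReal_ne_top
  have hGp : Measurable fun x => ENNReal.ofReal |g x| ^ p :=
    (ENNReal.continuous_rpow_const.measurable).comp (hg.abs.ennreal_ofReal)
  have key : ∀ m : Fin d → ℤ, ENNReal.ofReal |c⁻¹ * ∫ x, psi d h r v m x * g x| ^ p ≤
      (ENNReal.ofReal c)⁻¹ *
        ∫⁻ x, ENNReal.ofReal (psi d h r v m x) * ENNReal.ofReal |g x| ^ p := by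
    intro m
    set w : (Fin d → ℝ) → NNReal := fun x => Real.toNNReal (psi d h r v m x) with hw
    have hwmeas : Measurable w := (psi_continuous m).measurable.real_toNNReal
    have hcoe : ∀ x, ((w x : ENNReal)) = ENNReal.ofReal (psi d h r v m x) := fun x => rfl
    set μm : Measure (Fin d → ℝ) :=
      (ENNReal.ofReal c)⁻¹ • (volume.withDensity fun x => ((w x : ENNReal))) with hμm
    have hprob : IsProbabilityMeasure μm := by
      constructor
      rw [hμm, Measure.smul_apply, withDensity_apply _ MeasurableSet.univ,
        setLIntegral_univ, smul_eq_mul]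
      simp_rw [hcoe]
      rw [psi_lintegral hh hr m, ← hcdef, ENNReal.inv_mul_cancel hc0 hctop]
    have hint : ∫ x, g x ∂μm = c⁻¹ * ∫ x, psi d h r v m x * g x := by
      rw [hμm, integral_smul_measure, integral_withDensity_eq_integral_smul hwmeas]
      rw [ENNReal.toReal_inv, ENNReal.toReal_ofReal hc.le, smul_eq_mul]
      congr 1
      apply integral_congr_ae
      filter_upwards with x
      rw [NNReal.smul_def, smul_eq_mul, hw, Real.coe_toNNReal _ (psi_nonneg m x)]
    have hlin : ∫⁻ x, ENNReal.ofReal |g x| ^ p ∂μm = (ENNReal.ofReal c)⁻¹ *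
        ∫⁻ x, ENNReal.ofReal (psi d h r v m x) * ENNReal.ofReal |g x| ^ p := by
      rw [hμm, lintegral_smul_measure,
        lintegral_withDensity_eq_lintegral_mul _ hwmeas.coe_nnreal_ennreal hGp]
      rfl
    calc ENNReal.ofReal |c⁻¹ * ∫ x, psi d h r v m x * g x| ^ p
        = ENNReal.ofReal |∫ x, g x ∂μm| ^ p := by rw [hint]
      _ ≤ ∫⁻ x, ENNReal.ofReal |g x| ^ p ∂μm := jensen_pow μm hp hg.aestronglyMeasurable
      _ = _ := hlin
  calc ∑' m : Fin d → ℤ, ENNReal.ofReal |c⁻¹ * ∫ x, psi d h r v m x * g x| ^ p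
      ≤ ∑' m : Fin d → ℤ, (ENNReal.ofReal c)⁻¹ *
          ∫⁻ x, ENNReal.ofReal (psi d h r v m x) * ENNReal.ofReal |g x| ^ p :=
        ENNReal.tsum_le_tsum key
    _ = (ENNReal.ofReal c)⁻¹ * ∑' m : Fin d → ℤ,
          ∫⁻ x, ENNReal.ofReal (psi d h r v m x) * ENNReal.ofReal |g x| ^ p :=
        ENNReal.tsum_mul_left
    _ = (ENNReal.ofReal c)⁻¹ *
          ∫⁻ x, ∑' m : Fin d → ℤ, ENNReal.ofReal (psi d h r v m x) * ENNReal.ofReal |g x| ^ p := by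
        rw [← lintegral_tsum fun m =>
          ((((psi_continuous m).measurable.ennreal_ofReal).mul hGp).aemeasurable :
            AEMeasurable (fun x => ENNReal.ofReal (psi d h r v m x) * ENNReal.ofReal |g x| ^ p))]
    _ = (ENNReal.ofReal c)⁻¹ * ∫⁻ x, ENNReal.ofReal |g x| ^ p := by
        congr 1
        apply lintegral_congr
        intro x
        rw [ENNReal.tsum_mul_right, psi_tsum_eq_one hh hr x, one_mul]

/-! ### conversion to real inequality -/

lemma conv_bound {α ι : Type*} [MeasurableSpace α] {μ : Measure α} {c p : ℝ}
    (hc : 0 < c) (hp : 1 ≤ p) (F : ι → ℝ) (hF : ∀ m, 0 ≤ F m)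
    (fR : α → ℝ) (hfR : ∀ x, 0 ≤ fR x) (hint : Integrable fR μ)
    (H : ∑' m, ENNReal.ofReal (F m) ≤ (ENNReal.ofReal c)⁻¹ * ∫⁻ x, ENNReal.ofReal (fR x) ∂μ) :
    c ^ (1/p) * (∑' m, F m) ^ (1/p) ≤ (∫ x, fR x ∂μ) ^ (1/p) := by
  have hp0 : (0:ℝ) < p := lt_of_lt_of_le one_pos hp
  have hc0 : ENNReal.ofReal c ≠ 0 := (ENNReal.ofReal_pos.2 hc).ne'
  have hctop : ENNReal.ofReal c ≠ ⊤ := ENNReal.ofReal_ne_top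
  set L := ∫⁻ x, ENNReal.ofReal (fR x) ∂μ with hL
  have hLtop : L ≠ ⊤ := by
    have h2 := hint.2
    rw [HasFiniteIntegral] at h2
    rw [hL]
    have : ∀ x, ENNReal.ofReal (fR x) = (‖fR x‖₊ : ENNReal) := fun x =>
      (Real.enorm_eq_ofReal (hfR x)).symm
    simp_rw [this]
    exact h2.ne
  have hS : ∑' m, ENNReal.ofReal (F m) ≠ ⊤ :=
    ne_top_of_le_ne_top (ENNReal.mul_ne_top (ENNReal.inv_ne_top.2 hc0) hLtop) H
  have hsumm : Summable F := by
    have hs := ENNReal.summable_toReal hS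
    refine (summable_congr fun m => ?_).mp hs
    rw [ENNReal.toReal_ofReal (hF m)]
  have htsum : ENNReal.ofReal (∑' m, F m) = ∑' m, ENNReal.ofReal (F m) :=
    ENNReal.ofReal_tsum_of_nonneg hF hsumm
  have hkey : ENNReal.ofReal (c * ∑' m, F m) ≤ L := by
    rw [ENNReal.ofReal_mul hc.le, htsum]
    calc ENNReal.ofReal c * ∑' m, ENNReal.ofReal (F m)
        ≤ ENNReal.ofReal c * ((ENNReal.ofReal c)⁻¹ * L) := mul_le_mul_right H _
      _ = L := by rw [← mul_assoc, ENNReal.mul_inv_cancel hc0 hctop, one_mul]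
  have htsum_nonneg : (0:ℝ) ≤ ∑' m, F m := tsum_nonneg hF
  have hreal : c * ∑' m, F m ≤ ∫ x, fR x ∂μ := by
    have h2 : ∫ x, fR x ∂μ = L.toReal := by
      rw [integral_eq_lintegral_of_nonneg_ae (Filter.Eventually.of_forall hfR)
        hint.aestronglyMeasurable]
    rw [h2]
    have h3 := ENNReal.toReal_mono hLtop hkey
    rwa [ENNReal.toReal_ofReal (mul_nonneg hc.le htsum_nonneg)] at h3
  calc c ^ (1/p) * (∑' m, F m) ^ (1/p) = (c * ∑' m, F m) ^ (1/p) :=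
      (Real.mul_rpow hc.le htsum_nonneg).symm
    _ ≤ (∫ x, fR x ∂μ) ^ (1/p) := Real.rpow_le_rpow (by positivity) hreal (by positivity)

/-! ### finite difference identity -/

lemma psi_shift (hh : 0 < h) (hr : ∀ i, 0 < r i) (i : Fin d) (m : Fin d → ℤ) (x : Fin d → ℝ) :
    psi d h r v (m + Pi.single i 1) x = psi d h r v m (x - Pi.single i (h * (r i : ℝ))) := by
  unfold psi gridKnot
  apply Finset.prod_congr rfl
  intro j _
  congr 1
  have hone : ((((m + Pi.single i 1) : Fin d → ℤ) j : ℤ) : ℝ) = (m j : ℝ) + (if j = i then 1 else 0) := by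
    by_cases hji : j = i <;> simp [hji, Pi.single_apply]
  have hsub : ((x - Pi.single i (h * (r i : ℝ)) : Fin d → ℝ)) j = x j - (if j = i then h * (r i:ℝ) else 0) := by
    by_cases hji : j = i <;> simp [hji, Pi.single_apply]
  rw [hone, hsub]
  by_cases hji : j = i
  · subst hji; simp; ring
  · simp [hji]

lemma fdiff_hatCoeff_eq (hh : 0 < h) (hr : ∀ i, 0 < r i) (u : (Fin d → ℝ) → ℝ)
    (hC1 : ContDiff ℝ 1 u) (i : Fin d) (m : Fin d → ℤ) :
    fdiff d h r (hatCoeff d h r v u) i m = (h ^ d * volR d r)⁻¹ *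
      ∫ y, psi d h r v m y *
        (∫ t in (0:ℝ)..1, fderiv ℝ u
          (y + t • (Pi.single i (h * (r i : ℝ)) : Fin d → ℝ)) (Pi.single i 1)) := by
  have hri : (0:ℝ) < (r i : ℝ) := by exact_mod_cast hr i
  set a : Fin d → ℝ := Pi.single i (h * (r i : ℝ)) with ha
  set D : (Fin d → ℝ) → ℝ := fun z => fderiv ℝ u z (Pi.single i 1) with hD
  have hucont : Continuous u := hC1.continuous
  have hud : Differentiable ℝ u := hC1.differentiable one_ne_zero
  have hDcont : Continuous D := (hC1.continuous_fderiv one_ne_zero).clm_apply continuous_const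
  have hfa : ∀ z, fderiv ℝ u z a = (h * (r i : ℝ)) * D z := by
    intro z
    have h1 : a = (h * (r i : ℝ)) • (Pi.single i (1:ℝ) : Fin d → ℝ) := by
      funext j
      by_cases hji : j = i <;> simp [ha, hji, Pi.single_apply]
    rw [h1, (fderiv ℝ u z).map_smul, smul_eq_mul, hD]
  set w : (Fin d → ℝ) → ℝ := fun y => ∫ t in (0:ℝ)..1, D (y + t • a) with hw
  have hftc : ∀ y, u (y + a) - u y = (h * (r i : ℝ)) * w y := by
    intro y
    have hline : ∀ t : ℝ, HasDerivAt (fun s : ℝ => u (y + s • a))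
        ((h * (r i : ℝ)) * D (y + t • a)) t := by
      intro t
      have h1 : HasDerivAt (fun s : ℝ => y + s • a) a t := by
        have h2 : HasDerivAt (fun s : ℝ => s • a) ((1:ℝ) • a) t :=
          (hasDerivAt_id t).smul_const a
        rw [one_smul] at h2
        exact h2.const_add y
      have h3 := ((hud (y + t • a)).hasFDerivAt).comp_hasDerivAt t h1
      rw [hfa] at h3
      exact h3
    have hcont : Continuous fun t : ℝ => (h * (r i : ℝ)) * D (y + t • a) := by
      apply continuous_const.mul
      exact hDcont.comp (continuous_const.add (continuous_id.smul continuous_const))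
    have hint := intervalIntegral.integral_eq_sub_of_hasDerivAt
      (f := fun s : ℝ => u (y + s • a))
      (f' := fun t : ℝ => (h * (r i : ℝ)) * D (y + t • a))
      (fun t _ => hline t) (hcont.intervalIntegrable 0 1)
    rw [intervalIntegral.integral_const_mul] at hint
    rw [hw]
    simp only [one_smul, zero_smul, add_zero] at hint
    rw [← hint]
  have hInt0 : Integrable (fun y => psi d h r v m y * u y) :=
    (((psi_continuous m).mul hucont)).integrable_of_hasCompactSupport
      ((psi_hasCompactSupport hh hr m).mul_right)
  have hInt1 : Integrable (fun y => psi d h r v m y * u (y + a)) :=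
    (((psi_continuous m).mul (hucont.comp (continuous_id.add continuous_const)))).integrable_of_hasCompactSupport
      ((psi_hasCompactSupport hh hr m).mul_right)
  have h2 : ∫ x, psi d h r v (m + Pi.single i 1) x * u x
      = ∫ y, psi d h r v m y * u (y + a) := by
    have h3 := integral_add_right_eq_self (μ := volume)
      (fun x => psi d h r v m (x - a) * u x) a
    simp only [add_sub_cancel_right] at h3
    calc ∫ x, psi d h r v (m + Pi.single i 1) x * u x
        = ∫ x, psi d h r v m (x - a) * u x := by
          apply integral_congr_ae
          filter_upwards with x
          rw [psi_shift hh hr i m x]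
      _ = ∫ y, psi d h r v m y * u (y + a) := h3.symm
  unfold fdiff hatCoeff
  rw [h2, ← mul_sub, ← integral_sub hInt1 hInt0]
  have h4 : ∀ y, psi d h r v m y * u (y + a) - psi d h r v m y * u y
      = (h * (r i : ℝ)) * (psi d h r v m y * w y) := by
    intro y
    rw [← mul_sub, hftc y]
    ring
  simp_rw [h4]
  rw [integral_const_mul]
  rw [div_eq_iff (by positivity : ((r i:ℝ) * h) ≠ 0)]
  ring

/-! ### bound for the averaged derivative -/

lemma w_lintegral_bound {p : ℝ} (hp : 1 ≤ p) {D : (Fin d → ℝ) → ℝ} (hDcont : Continuous D)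
    (a : Fin d → ℝ) :
    ∫⁻ y : Fin d → ℝ, ENNReal.ofReal |∫ t in (0:ℝ)..1, D (y + t • a)| ^ p ≤
      ∫⁻ y : Fin d → ℝ, ENNReal.ofReal |D y| ^ p := by
  set ν : Measure ℝ := volume.restrict (Set.Ioc (0:ℝ) 1) with hν
  haveI : IsProbabilityMeasure ν := ⟨by
    rw [hν, Measure.restrict_apply MeasurableSet.univ, Set.univ_inter, Real.volume_Ioc]
    norm_num⟩
  have hjen : ∀ y : Fin d → ℝ, ENNReal.ofReal |∫ t in (0:ℝ)..1, D (y + t • a)| ^ p ≤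
      ∫⁻ t, ENNReal.ofReal |D (y + t • a)| ^ p ∂ν := by
    intro y
    have heq : ∫ t in (0:ℝ)..1, D (y + t • a) = ∫ t, D (y + t • a) ∂ν :=
      intervalIntegral.integral_of_le zero_le_one
    rw [heq]
    exact jensen_pow ν hp
      ((hDcont.comp (continuous_const.add (continuous_id.smul continuous_const))).aestronglyMeasurable)
  have hmeas : AEMeasurable
      (Function.uncurry fun (y : Fin d → ℝ) (t : ℝ) => ENNReal.ofReal |D (y + t • a)| ^ p)
      ((volume : Measure (Fin d → ℝ)).prod ν) := by
    apply Measurable.aemeasurable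
    have hcont : Continuous fun q : (Fin d → ℝ) × ℝ => ENNReal.ofReal |D (q.1 + q.2 • a)| ^ p :=
      ENNReal.continuous_rpow_const.comp (ENNReal.continuous_ofReal.comp
        ((hDcont.comp (continuous_fst.add (continuous_snd.smul continuous_const))).abs))
    exact hcont.measurable
  calc ∫⁻ y : Fin d → ℝ, ENNReal.ofReal |∫ t in (0:ℝ)..1, D (y + t • a)| ^ p
      ≤ ∫⁻ y : Fin d → ℝ, ∫⁻ t, ENNReal.ofReal |D (y + t • a)| ^ p ∂ν := lintegral_mono hjen
    _ = ∫⁻ t, ∫⁻ y : Fin d → ℝ, ENNReal.ofReal |D (y + t • a)| ^ p ∂volume ∂ν :=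
        lintegral_lintegral_swap hmeas
    _ = ∫⁻ _t, (∫⁻ y : Fin d → ℝ, ENNReal.ofReal |D y| ^ p) ∂ν := by
        apply lintegral_congr
        intro t
        exact lintegral_add_right_eq_self (fun y => ENNReal.ofReal |D y| ^ p) (t • a)
    _ = ∫⁻ y : Fin d → ℝ, ENNReal.ofReal |D y| ^ p := by
        rw [lintegral_const, measure_univ, mul_one]


/-- Lemma 3.7(ii): for a `C¹` function `u` with `u, ∂_i u ∈ L^p`, the Fourier coefficients
satisfy `(h^d vol(R))^{1/p} (Σ_m |û_m|^p)^{1/p} ≤ ‖u‖_{L^p}` and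
`(h^d vol(R))^{1/p} (Σ_m |(U_i û)_m|^p)^{1/p} ≤ ‖∂_i u‖_{L^p}`. -/
theorem hatCoeff_Lp_bounds (d : ℕ) (hd : 1 ≤ d) (h : ℝ) (hh : 0 < h)
    (r : Fin d → ℕ) (hr : ∀ i, 0 < r i) (v : Fin d → ℝ) (p : ℝ) (hp : 1 ≤ p)
    (u : (Fin d → ℝ) → ℝ) (hC1 : ContDiff ℝ 1 u)
    (huLp : MemLp u (ENNReal.ofReal p) (volume : Measure (Fin d → ℝ)))
    (hduLp : ∀ i : Fin d, MemLp (fun x => fderiv ℝ u x (Pi.single i 1))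
      (ENNReal.ofReal p) (volume : Measure (Fin d → ℝ))) :
    (h ^ d * volR d r) ^ (1 / p) *
        (∑' m : Fin d → ℤ, |hatCoeff d h r v u m| ^ p) ^ (1 / p) ≤
        (∫ x : Fin d → ℝ, |u x| ^ p) ^ (1 / p) ∧
      ∀ i : Fin d,
        (h ^ d * volR d r) ^ (1 / p) *
            (∑' m : Fin d → ℤ, |fdiff d h r (hatCoeff d h r v u) i m| ^ p) ^ (1 / p) ≤
          (∫ x : Fin d → ℝ, |fderiv ℝ u x (Pi.single i 1)| ^ p) ^ (1 / p) := by
  have hp0 : (0:ℝ) < p := lt_of_lt_of_le one_pos hp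
  have hc : 0 < h ^ d * volR d r := mul_pos (pow_pos hh d) (volR_pos hr)
  have hpne0 : (ENNReal.ofReal p) ≠ 0 := (ENNReal.ofReal_pos.2 hp0).ne'
  constructor
  · -- part 1
    apply conv_bound hc hp _ (fun m => Real.rpow_nonneg (abs_nonneg _) p) _
      (fun x => Real.rpow_nonneg (abs_nonneg _) p) ?_ ?_
    · -- integrability of |u|^p
      have hint := huLp.integrable_norm_rpow hpne0 ENNReal.ofReal_ne_top
      simpa [Real.norm_eq_abs, ENNReal.toReal_ofReal hp0.le] using hint
    · -- the ENNReal bound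
      have hcore := core_bound (v := v) hh hr hp u hC1.continuous.measurable
      simp_rw [← ENNReal.ofReal_rpow_of_nonneg (abs_nonneg _) hp0.le]
      simp only [hatCoeff]
      exact hcore
  · -- part 2
    intro i
    set a : Fin d → ℝ := Pi.single i (h * (r i : ℝ)) with ha
    set D : (Fin d → ℝ) → ℝ := fun z => fderiv ℝ u z (Pi.single i 1) with hD
    have hDcont : Continuous D := (hC1.continuous_fderiv one_ne_zero).clm_apply continuous_const
    set w : (Fin d → ℝ) → ℝ := fun y => ∫ t in (0:ℝ)..1, D (y + t • a) with hw
    have hwmeas : Measurable w := by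
      set ν : Measure ℝ := volume.restrict (Set.Ioc (0:ℝ) 1) with hν
      have hsm : StronglyMeasurable fun q : (Fin d → ℝ) × ℝ => D (q.1 + q.2 • a) :=
        (hDcont.comp (continuous_fst.add (continuous_snd.smul continuous_const))).stronglyMeasurable
      have h2 := hsm.integral_prod_right' (ν := ν)
      have h3 : w = fun y => ∫ t, D (y + t • a) ∂ν := by
        funext y
        exact intervalIntegral.integral_of_le zero_le_one
      rw [h3]
      exact h2.measurable
    apply conv_bound hc hp _ (fun m => Real.rpow_nonneg (abs_nonneg _) p) _
      (fun x => Real.rpow_nonneg (abs_nonneg _) p) ?_ ?_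
    · have hint := (hduLp i).integrable_norm_rpow hpne0 ENNReal.ofReal_ne_top
      simpa [Real.norm_eq_abs, ENNReal.toReal_ofReal hp0.le] using hint
    · have hcore := core_bound (v := v) hh hr hp w hwmeas
      have hid : ∀ m : Fin d → ℤ, fdiff d h r (hatCoeff d h r v u) i m
          = (h ^ d * volR d r)⁻¹ * ∫ x, psi d h r v m x * w x :=
        fun m => fdiff_hatCoeff_eq (v := v) hh hr u hC1 i m
      simp_rw [← ENNReal.ofReal_rpow_of_nonneg (abs_nonneg _) hp0.le, hid]
      calc ∑' m : Fin d → ℤ,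
            ENNReal.ofReal |(h ^ d * volR d r)⁻¹ * ∫ x, psi d h r v m x * w x| ^ p
          ≤ (ENNReal.ofReal (h ^ d * volR d r))⁻¹ * ∫⁻ x, ENNReal.ofReal |w x| ^ p := hcore
        _ ≤ (ENNReal.ofReal (h ^ d * volR d r))⁻¹ * ∫⁻ x, ENNReal.ofReal |D x| ^ p :=
            mul_le_mul_right (w_lintegral_bound hp hDcont a) _
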